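/- Let 𝕂 = ℝ or ℂ, let A and B be self-adjoint n×n matrices over 𝕂, and let 1 ≤ k ≤ n. Then √(Σ_{i=1}^k σ_{n−(i−1)}(A)²) ≥ √(Σ_{i=1}^k σ_{n−(i−1)}(B)²) − ‖A − B‖, where ‖·‖ is the Frobenius norm and σ_{n−(i−1)}(·) denotes the (n−i+1)-st largest singular value (so each sum is over the k smallest singular values). -/

import Mathlib

open scoped Matrix BigOperators ComplexOrder
open MeasureTheory ProbabilityTheory

noncomputable section

namespace SmoothedBM

variable {𝕂 : Type*} [RCLike 𝕂]

/-- Real Frobenius inner product `⟨A,B⟩ = Re tr(Aᴴ B)`. -/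
def finner {n k : ℕ} (A B : Matrix (Fin n) (Fin k) 𝕂) : ℝ :=
  RCLike.re (Matrix.trace (Aᴴ * B))

/-- Frobenius norm. -/
def fnorm {n k : ℕ} (A : Matrix (Fin n) (Fin k) 𝕂) : ℝ :=
  Real.sqrt (finner A A)

/-- Spectral (operator) norm: the largest singular value, i.e. the square root of the
largest eigenvalue of `Aᴴ * A`. -/
def opNorm {n k : ℕ} (A : Matrix (Fin n) (Fin k) 𝕂) : ℝ :=
  ⨆ i, Real.sqrt ((Matrix.isHermitian_conjTranspose_mul_self A).eigenvalues i)

/-- The `k`-th (smallest) singular value of an `n × k` matrix: the square root of the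
smallest eigenvalue of `Yᴴ * Y`.  (It is `0` when `k > n`.) -/
def sigmaLast {n k : ℕ} (Y : Matrix (Fin n) (Fin k) 𝕂) : ℝ :=
  Real.sqrt (⨅ i, (Matrix.isHermitian_conjTranspose_mul_self Y).eigenvalues i)

/-- Squared singular values of an `n × n` matrix, sorted in increasing order
(eigenvalues of `Aᴴ * A`, sorted). -/
def svSqAsc {n : ℕ} (A : Matrix (Fin n) (Fin n) 𝕂) : Fin n → ℝ := fun i =>
  (Matrix.isHermitian_conjTranspose_mul_self A).eigenvalues
    (Tuple.sort ((Matrix.isHermitian_conjTranspose_mul_self A).eigenvalues) i)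

/-- Sum of the squares of the `k` smallest singular values of an `n × n` matrix. -/
def sumSqSmallestSV {n : ℕ} (k : ℕ) (A : Matrix (Fin n) (Fin n) 𝕂) : ℝ :=
  ∑ i : Fin n, if (i : ℕ) < k then svSqAsc A i else 0

open Classical in
/-- Smallest eigenvalue of a self-adjoint matrix (junk value `0` if not self-adjoint). -/
def lambdaMin {n : ℕ} (A : Matrix (Fin n) (Fin n) 𝕂) : ℝ :=
  if hA : A.IsHermitian then ⨅ i, hA.eigenvalues i else 0

open Classical in
/-- Number of eigenvalues of a self-adjoint matrix lying in a set `I ⊆ ℝ`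
(junk value `0` if not self-adjoint). -/
def eigCountIn {n : ℕ} (A : Matrix (Fin n) (Fin n) 𝕂) (I : Set ℝ) : ℕ :=
  if hA : A.IsHermitian then (Finset.univ.filter fun i => hA.eigenvalues i ∈ I).card else 0

variable {n m k : ℕ}

/-- The constraint map `𝒜(Z)ᵢ = ⟨Aᵢ, Z⟩`. -/
def calA (A : Fin m → Matrix (Fin n) (Fin n) 𝕂) (Z : Matrix (Fin n) (Fin n) 𝕂) :
    Fin m → ℝ := fun i => finner (A i) Z

/-- The adjoint map `𝒜*(μ) = ∑ᵢ μᵢ Aᵢ`. -/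
def calAstar (A : Fin m → Matrix (Fin n) (Fin n) 𝕂) (μ : Fin m → ℝ) :
    Matrix (Fin n) (Fin n) 𝕂 := ∑ i, (μ i : 𝕂) • A i

/-- The SDP feasible set `𝒞`. -/
def SDPSet (A : Fin m → Matrix (Fin n) (Fin n) 𝕂) (b : Fin m → ℝ) :
    Set (Matrix (Fin n) (Fin n) 𝕂) :=
  {X | X.PosSemidef ∧ ∀ i, finner (A i) X = b i}

/-- The factorized feasible set `ℳ_k`. -/
def FactSet (A : Fin m → Matrix (Fin n) (Fin n) 𝕂) (b : Fin m → ℝ) (k : ℕ) :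
    Set (Matrix (Fin n) (Fin k) 𝕂) :=
  {Y | ∀ i, finner (A i) (Y * Yᴴ) = b i}

/-- The Gram matrix `G(Y)ᵢⱼ = ⟨AᵢY, AⱼY⟩`. -/
def gram (A : Fin m → Matrix (Fin n) (Fin n) 𝕂) (Y : Matrix (Fin n) (Fin k) 𝕂) :
    Matrix (Fin m) (Fin m) ℝ :=
  Matrix.of fun i j => finner (A i * Y) (A j * Y)

/-- The four Moore–Penrose identities. -/
def IsMoorePenrose {m : ℕ} (G H : Matrix (Fin m) (Fin m) ℝ) : Prop :=
  G * H * G = G ∧ H * G * H = H ∧ (G * H)ᵀ = G * H ∧ (H * G)ᵀ = H * G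

open Classical in
/-- The Moore–Penrose pseudo-inverse (the unique matrix satisfying the four
Moore–Penrose identities; junk value `0` if none exists). -/
def pinv {m : ℕ} (G : Matrix (Fin m) (Fin m) ℝ) : Matrix (Fin m) (Fin m) ℝ :=
  if h : ∃ H, IsMoorePenrose G H then h.choose else 0

/-- The matrix `S(Y) = C − 𝒜*(G(Y)† 𝒜(C Y Yᴴ))`. -/
def Smat (A : Fin m → Matrix (Fin n) (Fin n) 𝕂) (C : Matrix (Fin n) (Fin n) 𝕂)
    (Y : Matrix (Fin n) (Fin k) 𝕂) : Matrix (Fin n) (Fin n) 𝕂 :=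
  C - calAstar A (pinv (gram A Y) *ᵥ calA A (C * (Y * Yᴴ)))

/-- `Y` is an `εg`-approximate first-order stationary point of the factorized problem. -/
def IsFOSP (A : Fin m → Matrix (Fin n) (Fin n) 𝕂) (b : Fin m → ℝ)
    (C : Matrix (Fin n) (Fin n) 𝕂) (Y : Matrix (Fin n) (Fin k) 𝕂) (εg : ℝ) : Prop :=
  Y ∈ FactSet A b k ∧ fnorm ((2 : 𝕂) • (Smat A C Y * Y)) ≤ εg

/-- `Y` is an `(εg, εH)`-approximate second-order stationary point of the factorized problem. -/
def IsSOSP (A : Fin m → Matrix (Fin n) (Fin n) 𝕂) (b : Fin m → ℝ)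
    (C : Matrix (Fin n) (Fin n) 𝕂) (Y : Matrix (Fin n) (Fin k) 𝕂) (εg εH : ℝ) : Prop :=
  IsFOSP A b C Y εg ∧
    ∀ V : Matrix (Fin n) (Fin k) 𝕂, (∀ i, finner (A i * Y) V = 0) →
      -εH * (fnorm V) ^ 2 ≤ finner V (Smat A C Y * V)

/-- The smooth-manifold assumption (Assumption 1). -/
def SmoothAssumption (A : Fin m → Matrix (Fin n) (Fin n) 𝕂) (b : Fin m → ℝ) : Prop :=
  ∀ k' : ℕ, k' ≤ n → (FactSet A b k').Nonempty →
    (∀ Y ∈ FactSet A b k', LinearIndependent ℝ fun i => A i * Y) ∨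
    (∃ U : Set (Matrix (Fin n) (Fin k') 𝕂), IsOpen U ∧ FactSet A b k' ⊆ U ∧
      ∃ d : ℕ, ∀ Y ∈ U,
        Module.finrank ℝ (Submodule.span ℝ (Set.range fun i => A i * Y)) = d)

/-- A real Gaussian Wigner matrix with variance `σ²`: a random real symmetric matrix whose
on-and-above-diagonal entries are independent centered Gaussians `N(0, σ²)`. -/
structure IsRealWigner {Ω : Type*} [MeasurableSpace Ω] (μ : Measure Ω) {n : ℕ} (σ : ℝ)
    (W : Ω → Matrix (Fin n) (Fin n) ℝ) : Prop where
  symm : ∀ ω, (W ω)ᵀ = W ω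
  meas : ∀ i j, Measurable fun ω => W ω i j
  indep : iIndepFun (β := fun _ : {p : Fin n × Fin n // p.1 ≤ p.2} => ℝ)
    (fun p ω => W ω p.val.1 p.val.2) μ
  gauss : ∀ i j : Fin n, i ≤ j →
    Measure.map (fun ω => W ω i j) μ = gaussianReal 0 ⟨σ ^ 2, sq_nonneg σ⟩

/-- The independent real coordinates of a complex Hermitian random matrix:
diagonal entries, and real/imaginary parts of the above-diagonal entries. -/
def wignerParts {Ω : Type*} {n : ℕ} (W : Ω → Matrix (Fin n) (Fin n) ℂ) :
    (Fin n ⊕ {p : Fin n × Fin n // p.1 < p.2} × Bool) → Ω → ℝ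
  | Sum.inl i => fun ω => (W ω i i).re
  | Sum.inr (p, false) => fun ω => (W ω p.val.1 p.val.2).re
  | Sum.inr (p, true) => fun ω => (W ω p.val.1 p.val.2).im

/-- A complex Gaussian Wigner matrix with variance `σ²`: a random Hermitian matrix whose
on-and-above-diagonal entries are independent, the diagonal entries being real `N(0, σ²)` and
the above-diagonal entries having independent `N(0, σ²/2)` real and imaginary parts. -/
structure IsComplexWigner {Ω : Type*} [MeasurableSpace Ω] (μ : Measure Ω) {n : ℕ} (σ : ℝ)
    (W : Ω → Matrix (Fin n) (Fin n) ℂ) : Prop where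
  herm : ∀ ω, (W ω).IsHermitian
  meas : ∀ i j, Measurable fun ω => W ω i j
  indep : iIndepFun (β := fun _ : Fin n ⊕ {p : Fin n × Fin n // p.1 < p.2} × Bool => ℝ)
    (wignerParts W) μ
  diag : ∀ i : Fin n,
    Measure.map (fun ω => (W ω i i).re) μ = gaussianReal 0 ⟨σ ^ 2, sq_nonneg σ⟩
  off_re : ∀ i j : Fin n, i < j →
    Measure.map (fun ω => (W ω i j).re) μ = gaussianReal 0 ⟨σ ^ 2 / 2, by positivity⟩
  off_im : ∀ i j : Fin n, i < j →
    Measure.map (fun ω => (W ω i j).im) μ = gaussianReal 0 ⟨σ ^ 2 / 2, by positivity⟩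


section Aux

variable {𝕂' : Type*} [RCLike 𝕂']

private lemma re_diag_conjTranspose_mul {N : ℕ} (Y : Matrix (Fin N) (Fin N) 𝕂') (j : Fin N) :
    RCLike.re ((Yᴴ * Y) j j) = ∑ i, ‖Y i j‖ ^ 2 := by
  rw [Matrix.mul_apply, map_sum]
  refine Finset.sum_congr rfl fun i _ => ?_
  rw [Matrix.conjTranspose_apply, RCLike.star_def, RCLike.conj_mul,
    ← RCLike.ofReal_pow, RCLike.ofReal_re]

private lemma re_diag_mul_conjTranspose {N : ℕ} (C : Matrix (Fin N) (Fin N) 𝕂') (l : Fin N) :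
    RCLike.re ((C * Cᴴ) l l) = ∑ j, ‖C l j‖ ^ 2 := by
  rw [Matrix.mul_apply, map_sum]
  refine Finset.sum_congr rfl fun j _ => ?_
  rw [Matrix.conjTranspose_apply, RCLike.star_def, RCLike.mul_conj,
    ← RCLike.ofReal_pow, RCLike.ofReal_re]

private lemma re_diag_conj_diagonal {N : ℕ} (C : Matrix (Fin N) (Fin N) 𝕂') (ν : Fin N → ℝ)
    (j : Fin N) :
    RCLike.re ((Cᴴ * ((Matrix.diagonal (RCLike.ofReal ∘ ν) : Matrix (Fin N) (Fin N) 𝕂') * C)) j j)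
      = ∑ l, ν l * ‖C l j‖ ^ 2 := by
  rw [Matrix.mul_apply, map_sum]
  refine Finset.sum_congr rfl fun l _ => ?_
  rw [Matrix.conjTranspose_apply, Matrix.diagonal_mul, RCLike.star_def]
  have : (starRingEnd 𝕂') (C l j) * ((Function.comp (RCLike.ofReal (K := 𝕂')) ν) l * C l j)
      = ((ν l * ‖C l j‖ ^ 2 : ℝ) : 𝕂') := by
    rw [Function.comp_apply, mul_left_comm, RCLike.conj_mul]
    push_cast
    ring
  rw [this, RCLike.ofReal_re]

private lemma sum_ite_le_sum_mul {N K : ℕ} (hk1 : 1 ≤ K) (hkn : K ≤ N)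
    (g t : Fin N → ℝ) (hg : Monotone g) (ht0 : ∀ i, 0 ≤ t i) (ht1 : ∀ i, t i ≤ 1)
    (hts : ∑ i, t i = K) :
    (∑ i : Fin N, if (i : ℕ) < K then g i else 0) ≤ ∑ i, g i * t i := by
  have hkpos : K - 1 < N := by omega
  set c := g ⟨K - 1, hkpos⟩ with hc
  have hones : (∑ i : Fin N, if (i : ℕ) < K then (1 : ℝ) else 0) = K := by
    rw [Fin.sum_univ_eq_sum_range (fun i => if i < K then (1 : ℝ) else 0)]
    rw [← Finset.sum_filter]
    have : (Finset.range N).filter (fun i => i < K) = Finset.range K := by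
      ext i; simp only [Finset.mem_filter, Finset.mem_range]; omega
    rw [this, Finset.sum_const, Finset.card_range]
    simp
  have key : ∀ i : Fin N,
      c * (t i - if (i : ℕ) < K then 1 else 0)
        ≤ g i * t i - (if (i : ℕ) < K then g i else 0) := by
    intro i
    by_cases h : (i : ℕ) < K
    · simp only [h, if_true]
      have hgi : g i ≤ c := hg (by simp only [Fin.le_def]; omega)
      nlinarith [ht1 i]
    · simp only [h, if_false]
      have hgi : c ≤ g i := hg (by simp only [Fin.le_def]; omega)
      nlinarith [ht0 i]
  have h1 : (0 : ℝ) ≤ ∑ i, (g i * t i - if (i : ℕ) < K then g i else 0) := by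
    calc (0 : ℝ) = ∑ i : Fin N, c * (t i - if (i : ℕ) < K then 1 else 0) := by
          rw [← Finset.mul_sum, Finset.sum_sub_distrib, hts, hones, sub_self, mul_zero]
      _ ≤ _ := Finset.sum_le_sum fun i _ => key i
  rw [Finset.sum_sub_distrib] at h1
  linarith

private lemma kyfan {N K : ℕ} (hk1 : 1 ≤ K) (hkn : K ≤ N) (ν : Fin N → ℝ)
    (t : Fin N → ℝ) (ht0 : ∀ l, 0 ≤ t l) (ht1 : ∀ l, t l ≤ 1) (hts : ∑ l, t l = K) :
    (∑ i : Fin N, if (i : ℕ) < K then ν (Tuple.sort ν i) else 0) ≤ ∑ l, ν l * t l := by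
  have hmono := Tuple.monotone_sort ν
  have h := sum_ite_le_sum_mul hk1 hkn (ν ∘ Tuple.sort ν) (t ∘ Tuple.sort ν) hmono
    (fun i => ht0 _) (fun i => ht1 _)
    (by rw [show (∑ i, (t ∘ Tuple.sort ν) i) = ∑ i, t i from
          Equiv.sum_comp (Tuple.sort ν) t]; exact hts)
  calc (∑ i : Fin N, if (i : ℕ) < K then ν (Tuple.sort ν i) else 0)
      ≤ ∑ i, (ν ∘ Tuple.sort ν) i * (t ∘ Tuple.sort ν) i := h
    _ = ∑ l, ν l * t l := Equiv.sum_comp (Tuple.sort ν) (fun l => ν l * t l)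

end Aux

/-- perturbation bound for the k smallest singular values of
self-adjoint matrices. -/
theorem sqrt_sumSqSmallestSV_ge_sub_frobenius
    {𝕂 : Type*} [RCLike 𝕂] {n : ℕ} (k : ℕ) (hk1 : 1 ≤ k) (hkn : k ≤ n)
    (A B : Matrix (Fin n) (Fin n) 𝕂) (hA : A.IsHermitian) (hB : B.IsHermitian) :
    Real.sqrt (sumSqSmallestSV k B) - fnorm (A - B) ≤
      Real.sqrt (sumSqSmallestSV k A) := by
  classical
  have hM := Matrix.isHermitian_conjTranspose_mul_self A
  have hN := Matrix.isHermitian_conjTranspose_mul_self B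
  set E : Matrix (Fin n) (Fin n) 𝕂 := A - B with hE
  set U : Matrix (Fin n) (Fin n) 𝕂 := (hM.eigenvectorUnitary : Matrix (Fin n) (Fin n) 𝕂)
    with hUdef
  set W : Matrix (Fin n) (Fin n) 𝕂 := (hN.eigenvectorUnitary : Matrix (Fin n) (Fin n) 𝕂)
    with hWdef
  have hUU : U * Uᴴ = 1 := by
    rw [← Matrix.star_eq_conjTranspose]
    exact Matrix.mem_unitaryGroup_iff.mp hM.eigenvectorUnitary.2
  have hUU' : Uᴴ * U = 1 := by
    rw [← Matrix.star_eq_conjTranspose]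
    exact Matrix.mem_unitaryGroup_iff'.mp hM.eigenvectorUnitary.2
  have hWW : W * Wᴴ = 1 := by
    rw [← Matrix.star_eq_conjTranspose]
    exact Matrix.mem_unitaryGroup_iff.mp hN.eigenvectorUnitary.2
  have hWW' : Wᴴ * W = 1 := by
    rw [← Matrix.star_eq_conjTranspose]
    exact Matrix.mem_unitaryGroup_iff'.mp hN.eigenvectorUnitary.2
  set μ : Fin n → ℝ := hM.eigenvalues with hμdef
  set ν : Fin n → ℝ := hN.eigenvalues with hνdef
  set F : Finset (Fin n) := Finset.univ.filter (fun i : Fin n => (i : ℕ) < k) with hF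
  set S : Finset (Fin n) := F.image (Tuple.sort μ) with hS
  have hcardF : F.card = k := by
    apply Finset.card_eq_of_bijective (fun i hi => (⟨i, lt_of_lt_of_le hi hkn⟩ : Fin n))
    · intro a ha
      rw [hF, Finset.mem_filter] at ha
      exact ⟨(a : ℕ), ha.2, by simp⟩
    · intro i hi
      rw [hF, Finset.mem_filter]
      exact ⟨Finset.mem_univ _, hi⟩
    · intro i j hi hj h
      simpa using congrArg Fin.val h
  have hcardS : S.card = k := by
    rw [hS, Finset.card_image_of_injective _ (Tuple.sort μ).injective, hcardF]
  -- the "k smallest columns" map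
  set T : Matrix (Fin n) (Fin n) 𝕂 → EuclideanSpace 𝕂 (Fin n × Fin n) :=
    fun X => (WithLp.equiv 2 ((Fin n × Fin n) → 𝕂)).symm
      (fun p => if p.2 ∈ S then (X * U) p.1 p.2 else 0) with hT
  -- norm of T X
  have hTnorm : ∀ X : Matrix (Fin n) (Fin n) 𝕂,
      ‖T X‖ = Real.sqrt (∑ j ∈ S, ∑ i, ‖(X * U) i j‖ ^ 2) := by
    intro X
    rw [EuclideanSpace.norm_eq]
    congr 1
    have hterm : ∀ p : Fin n × Fin n,
        ‖T X p‖ ^ 2 = if p.2 ∈ S then ‖(X * U) p.1 p.2‖ ^ 2 else 0 := by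
      intro p
      rw [hT]
      simp only [WithLp.equiv_symm_apply, PiLp.toLp_apply]
      split <;> simp
    calc (∑ p : Fin n × Fin n, ‖T X p‖ ^ 2)
        = ∑ p : Fin n × Fin n, if p.2 ∈ S then ‖(X * U) p.1 p.2‖ ^ 2 else 0 :=
          Finset.sum_congr rfl fun p _ => hterm p
      _ = ∑ i : Fin n, ∑ j : Fin n, if j ∈ S then ‖(X * U) i j‖ ^ 2 else 0 := by
          rw [Fintype.sum_prod_type]
      _ = ∑ i : Fin n, ∑ j ∈ S, ‖(X * U) i j‖ ^ 2 := by
          refine Finset.sum_congr rfl fun i _ => ?_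
          rw [Finset.sum_ite_mem, Finset.univ_inter]
      _ = ∑ j ∈ S, ∑ i, ‖(X * U) i j‖ ^ 2 := Finset.sum_comm
  -- column sums as diagonal entries
  have hcol : ∀ (X : Matrix (Fin n) (Fin n) 𝕂) (j : Fin n),
      (∑ i, ‖(X * U) i j‖ ^ 2) = RCLike.re ((Uᴴ * (Xᴴ * X) * U) j j) := by
    intro X j
    rw [← re_diag_conjTranspose_mul (X * U) j]
    congr 2
    rw [Matrix.conjTranspose_mul]
    simp [Matrix.mul_assoc]
  -- T B = T A - T E
  have hTBsub : T B = T A - T E := by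
    rw [hT]
    simp only
    rw [WithLp.equiv_symm_apply, ← WithLp.toLp_sub]
    congr 1
    funext p
    simp only [Pi.sub_apply]
    have hBAE : B = A - E := by rw [hE]; abel
    rw [hBAE, Matrix.sub_mul, Matrix.sub_apply]
    split <;> simp
  -- value at A
  have hQA : (∑ j ∈ S, ∑ i, ‖(A * U) i j‖ ^ 2) = sumSqSmallestSV k A := by
    have hdiag : Uᴴ * (Aᴴ * A) * U = Matrix.diagonal (RCLike.ofReal ∘ μ) := by
      rw [← Matrix.star_eq_conjTranspose]
      have h := hM.conjStarAlgAut_star_eigenvectorUnitary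
      rw [Unitary.conjStarAlgAut_apply, Unitary.coe_star, star_star] at h
      exact h
    have h1 : ∀ j ∈ S, (∑ i, ‖(A * U) i j‖ ^ 2) = μ j := by
      intro j _
      rw [hcol A j, hdiag, Matrix.diagonal_apply_eq, Function.comp_apply, RCLike.ofReal_re]
    rw [Finset.sum_congr rfl h1]
    rw [hS, Finset.sum_image (fun i _ j _ h => (Tuple.sort μ).injective h)]
    rw [sumSqSmallestSV]
    rw [hF, ← Finset.sum_filter]
    rfl
  -- bound at E
  have hQE : (∑ j ∈ S, ∑ i, ‖(E * U) i j‖ ^ 2) ≤ finner E E := by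
    have hle : (∑ j ∈ S, ∑ i, ‖(E * U) i j‖ ^ 2)
        ≤ ∑ j : Fin n, ∑ i, ‖(E * U) i j‖ ^ 2 := by
      refine Finset.sum_le_sum_of_subset_of_nonneg (Finset.subset_univ S) ?_
      intro j _ _
      positivity
    refine hle.trans_eq ?_
    have htr : ((E * U)ᴴ * (E * U)).trace = (Eᴴ * E).trace := by
      rw [Matrix.conjTranspose_mul, Matrix.mul_assoc, Matrix.trace_mul_comm]
      simp only [Matrix.mul_assoc]
      rw [hUU, Matrix.mul_one, Matrix.trace_mul_comm]
    calc (∑ j : Fin n, ∑ i, ‖(E * U) i j‖ ^ 2)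
        = ∑ j : Fin n, RCLike.re (((E * U)ᴴ * (E * U)) j j) := by
          refine Finset.sum_congr rfl fun j _ => ?_
          rw [re_diag_conjTranspose_mul]
      _ = RCLike.re (((E * U)ᴴ * (E * U)).trace) := by
          rw [Matrix.trace, map_sum]
          rfl
      _ = RCLike.re ((Eᴴ * E).trace) := by rw [htr]
      _ = finner E E := rfl
  -- Ky Fan lower bound at B
  have hQB : sumSqSmallestSV k B ≤ ∑ j ∈ S, ∑ i, ‖(B * U) i j‖ ^ 2 := by
    set C : Matrix (Fin n) (Fin n) 𝕂 := Wᴴ * U with hC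
    have hCC : Cᴴ * C = 1 := by
      rw [hC, Matrix.conjTranspose_mul, Matrix.conjTranspose_conjTranspose,
        Matrix.mul_assoc, ← Matrix.mul_assoc W, hWW]
      simp [hUU']
    have hCC' : C * Cᴴ = 1 := by
      rw [hC, Matrix.conjTranspose_mul, Matrix.conjTranspose_conjTranspose,
        Matrix.mul_assoc, ← Matrix.mul_assoc U, hUU]
      simp [hWW']
    set t : Fin n → ℝ := fun l => ∑ j ∈ S, ‖C l j‖ ^ 2 with ht
    have hrow : ∀ l : Fin n, (∑ j : Fin n, ‖C l j‖ ^ 2) = 1 := by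
      intro l
      rw [← re_diag_mul_conjTranspose C l, hCC']
      simp
    have hcolC : ∀ j : Fin n, (∑ l : Fin n, ‖C l j‖ ^ 2) = 1 := by
      intro j
      rw [← re_diag_conjTranspose_mul C j, hCC]
      simp
    have ht0 : ∀ l, 0 ≤ t l := by intro l; rw [ht]; positivity
    have ht1 : ∀ l, t l ≤ 1 := by
      intro l
      rw [ht]
      calc (∑ j ∈ S, ‖C l j‖ ^ 2) ≤ ∑ j : Fin n, ‖C l j‖ ^ 2 := by
            refine Finset.sum_le_sum_of_subset_of_nonneg (Finset.subset_univ S) ?_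
            intro j _ _
            positivity
        _ = 1 := hrow l
    have hts : (∑ l, t l) = k := by
      rw [ht]
      rw [Finset.sum_comm]
      rw [Finset.sum_congr rfl fun j _ => hcolC j]
      simp [hcardS]
    have hB2 : ∀ j : Fin n, (∑ i, ‖(B * U) i j‖ ^ 2) = ∑ l, ν l * ‖C l j‖ ^ 2 := by
      intro j
      rw [hcol B j]
      have hmat : Uᴴ * (Bᴴ * B) * U
          = Cᴴ * (Matrix.diagonal (RCLike.ofReal ∘ ν) * C) := by
        rw [hC, Matrix.conjTranspose_mul, Matrix.conjTranspose_conjTranspose]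
        have hspec : Bᴴ * B = W * Matrix.diagonal (RCLike.ofReal ∘ ν) * Wᴴ := by
          have h := hN.spectral_theorem
          rw [Unitary.conjStarAlgAut_apply, Matrix.star_eq_conjTranspose] at h
          exact h
        rw [hspec]
        simp [Matrix.mul_assoc]
      rw [hmat, re_diag_conj_diagonal]
    have hsum : (∑ j ∈ S, ∑ i, ‖(B * U) i j‖ ^ 2) = ∑ l, ν l * t l := by
      rw [Finset.sum_congr rfl fun j _ => hB2 j, Finset.sum_comm]
      rw [ht]
      refine Finset.sum_congr rfl fun l _ => ?_
      rw [Finset.mul_sum]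
    rw [hsum]
    have hkf := kyfan hk1 hkn ν t ht0 ht1 hts
    refine le_trans (le_of_eq ?_) hkf
    rfl
  -- assemble
  have h1 : Real.sqrt (sumSqSmallestSV k B) ≤ ‖T B‖ := by
    rw [hTnorm B]
    exact Real.sqrt_le_sqrt hQB
  have h2 : ‖T B‖ ≤ ‖T A‖ + ‖T E‖ := by
    rw [hTBsub]
    exact norm_sub_le _ _
  have h3 : ‖T A‖ = Real.sqrt (sumSqSmallestSV k A) := by rw [hTnorm A, hQA]
  have h4 : ‖T E‖ ≤ fnorm (A - B) := by
    rw [hTnorm E]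
    exact Real.sqrt_le_sqrt hQE
  linarith

end SmoothedBM
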